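/- Let G act on X and Y via ρ_X, ρ_Y, let h(g|x) be a G-equivariant probability kernel supported on a compact subset M ⊆ G uniformly over a compact set K ⊆ X, and suppose ρ_Y is continuous. If φ can approximate any continuous function arbitrarily well on compact sets, then for any continuous G-equivariant ψ: X → Y and ε > 0, there is a choice of φ so that the symmetrized function κ(x) = E_{h(g|x)}[ρ_Y(g) φ(ρ_X(g)⁻¹ x)] satisfies ‖ψ(x) − κ(x)‖ ≤ ε for all x ∈ K. Key inequality: ‖ψ(x) − κ(x)‖ ≤ (max_{g ∈ M} ‖ρ_Y(g)‖) · sup_{g ∈ M} ‖ψ(ρ_X(g)⁻¹ x) − φ(ρ_X(g)⁻¹ x)‖. -/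

import Mathlib

open MeasureTheory

/-- Universality of symmetrization: if the base-function class F is a universal
approximator of continuous functions on compact sets, and h(·|x) is a
G-equivariant probability kernel whose supports over a compact set K lie in a
common compact M ⊆ G, then for any continuous G-equivariant ψ and ε > 0 there
is φ ∈ F so that the symmetrized function κ(x) = E_{h(g|x)}[ρ_Y(g) φ(ρ_X(g)⁻¹ x)]
is ε-close to ψ uniformly on K. -/
theorem stmt_12 (G X Y : Type*) [Group G] [TopologicalSpace G] [MeasurableSpace G]
    [BorelSpace G] [IsTopologicalGroup G]
    [NormedAddCommGroup X] [NormedSpace ℝ X] [FiniteDimensional ℝ X]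
    [NormedAddCommGroup Y] [NormedSpace ℝ Y] [FiniteDimensional ℝ Y]
    (ρX : G →* (X ≃ₗ[ℝ] X)) (ρY : G →* (Y ≃ₗ[ℝ] Y))
    (hρXcont : Continuous fun p : G × X => ρX p.1 p.2)
    (hρYcont : Continuous fun p : G × Y => ρY p.1 p.2)
    (μ : X → Measure G) (hprob : ∀ x, IsProbabilityMeasure (μ x))
    (hequiv : ∀ (g' : G) (x : X),
      μ (ρX g' x) = Measure.map (fun g => g' * g) (μ x))
    (K : Set X) (hK : IsCompact K)
    (M : Set G) (hM : IsCompact M)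
    (hsupp : ∀ x ∈ K, μ x Mᶜ = 0)
    (F : Set (X → Y)) (hFcont : ∀ φ ∈ F, Continuous φ)
    (huniv : ∀ (C : Set X), IsCompact C → ∀ (u : X → Y), Continuous u →
      ∀ δ > 0, ∃ φ ∈ F, ∀ x ∈ C, ‖u x - φ x‖ ≤ δ)
    (ψ : X → Y) (hψcont : Continuous ψ)
    (hψequiv : ∀ (g : G) (x : X), ψ (ρX g x) = ρY g (ψ x))
    (ε : ℝ) (hε : 0 < ε) :
    ∃ φ ∈ F, ∀ x ∈ K,
      ‖ψ x - ∫ g, ρY g (φ ((ρX g)⁻¹ x)) ∂(μ x)‖ ≤ ε := by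
  -- Compact set C = images of K under ρX g⁻¹, g ∈ M
  set C : Set X := (fun p : G × X => ρX p.1 p.2) '' (M⁻¹ ×ˢ K) with hCdef
  have hC : IsCompact C := ((hM.inv).prod hK).image hρXcont
  -- Bound B on ‖ρY g v‖ for g ∈ M, ‖v‖ ≤ 1
  obtain ⟨B0, hB0⟩ := isBounded_iff_forall_norm_le.mp
    (((hM.prod (isCompact_closedBall (0:Y) 1)).image hρYcont).isBounded)
  set B : ℝ := max B0 1 with hBdef
  have hB1 : (1:ℝ) ≤ B := le_max_right _ _
  have hBpos : (0:ℝ) < B := lt_of_lt_of_le one_pos hB1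
  have hBop : ∀ g ∈ M, ∀ v : Y, ‖ρY g v‖ ≤ B * ‖v‖ := by
    intro g hg v
    rcases eq_or_ne v 0 with rfl | hv
    · simp
    · have hw : (‖v‖⁻¹ • v) ∈ Metric.closedBall (0:Y) 1 := by
        simp [norm_smul, abs_of_nonneg (norm_nonneg v),
          inv_mul_cancel₀ (norm_ne_zero_iff.mpr hv)]
      have := hB0 _ ⟨(g, ‖v‖⁻¹ • v), ⟨hg, hw⟩, rfl⟩
      rw [show (fun p : G × Y => ρY p.1 p.2) (g, ‖v‖⁻¹ • v) = ‖v‖⁻¹ • ρY g v from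
        _root_.map_smul (ρY g : Y →ₗ[ℝ] Y) _ _, norm_smul, norm_inv, norm_norm] at this
      have hvp : (0:ℝ) < ‖v‖ := norm_pos_iff.mpr hv
      calc ‖ρY g v‖ = ‖v‖ * (‖v‖⁻¹ * ‖ρY g v‖) := by
            field_simp
        _ ≤ ‖v‖ * B0 := by
            exact mul_le_mul_of_nonneg_left this hvp.le
        _ ≤ B * ‖v‖ := by
            rw [mul_comm]
            exact mul_le_mul_of_nonneg_right (le_max_left _ _) hvp.le
  obtain ⟨φ, hφF, hφ⟩ := huniv C hC ψ hψcont (ε / B) (div_pos hε hBpos)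
  have hφcont := hFcont φ hφF
  refine ⟨φ, hφF, ?_⟩
  intro x hx
  haveI := hprob x
  -- a.e. membership in M
  have hae : ∀ᵐ g ∂(μ x), g ∈ M := by
    rw [ae_iff]
    exact hsupp x hx
  -- key pointwise bound on M
  have hkey : ∀ g ∈ M, ‖ψ x - ρY g (φ ((ρX g)⁻¹ x))‖ ≤ ε := by
    intro g hg
    set y : X := (ρX g)⁻¹ x with hy
    have hyC : y ∈ C := ⟨(g⁻¹, x), ⟨Set.inv_mem_inv.mpr hg, hx⟩, by
      simp [hy, map_inv]⟩
    have hpsix : ψ x = ρY g (ψ y) := by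
      have h2 : ρX g ((ρX g)⁻¹ x) = x := (ρX g).apply_symm_apply x
      have : ψ (ρX g y) = ρY g (ψ y) := hψequiv g y
      rwa [hy, h2] at this
    calc ‖ψ x - ρY g (φ y)‖ = ‖ρY g (ψ y - φ y)‖ := by
          rw [hpsix, ← map_sub]
      _ ≤ B * ‖ψ y - φ y‖ := hBop g hg _
      _ ≤ B * (ε / B) := mul_le_mul_of_nonneg_left (hφ y hyC) hBpos.le
      _ = ε := by field_simp
  -- continuity of integrand
  have hcont : Continuous fun g : G => ρY g (φ ((ρX g)⁻¹ x)) := by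
    have h1 : Continuous fun g : G => ((ρX g)⁻¹ : X ≃ₗ[ℝ] X) x := by
      have : Continuous fun g : G => (ρX g⁻¹ : X ≃ₗ[ℝ] X) x :=
        hρXcont.comp (continuous_inv.prodMk continuous_const)
      simpa [map_inv] using this
    exact hρYcont.comp (continuous_id.prodMk (hφcont.comp h1))
  have hint : Integrable (fun g : G => ρY g (φ ((ρX g)⁻¹ x))) (μ x) := by
    refine (integrable_const (‖ψ x‖ + ε)).mono' hcont.aestronglyMeasurable ?_
    filter_upwards [hae] with g hg
    have := hkey g hg
    calc ‖ρY g (φ ((ρX g)⁻¹ x))‖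
        = ‖ψ x - (ψ x - ρY g (φ ((ρX g)⁻¹ x)))‖ := by rw [sub_sub_cancel]
      _ ≤ ‖ψ x‖ + ‖ψ x - ρY g (φ ((ρX g)⁻¹ x))‖ := norm_sub_le _ _
      _ ≤ ‖ψ x‖ + ε := by linarith
  have hconst : (∫ _ : G, ψ x ∂(μ x)) = ψ x := by
    simp [integral_const]
  calc ‖ψ x - ∫ g, ρY g (φ ((ρX g)⁻¹ x)) ∂(μ x)‖
      = ‖∫ g, (ψ x - ρY g (φ ((ρX g)⁻¹ x))) ∂(μ x)‖ := by
        rw [integral_sub (integrable_const _) hint, hconst]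
    _ ≤ ε := by
        have h := norm_integral_le_of_norm_le_const (C := ε)
          (μ := μ x) (f := fun g => ψ x - ρY g (φ ((ρX g)⁻¹ x)))
          (by filter_upwards [hae] with g hg using hkey g hg)
        simpa using h
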